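/- Let (K, t, c, λ) be a weak mixed distributive law in Cat, and let the idempotent Θ = (ε t c) ∘ (λ c) ∘ (t δ) : tc ⟶ tc split as Θ = σ ∘ π with π : tc ⟶ a epi half and σ : a ⟶ tc mono half, π ∘ σ = id_a. Define α : ta ⟶ a by α = π ∘ (μ ▷ c) ∘ (t ◁ σ). Then α is an action of the monad t on a: α ∘ (η ▷ a) = id_a and α ∘ (μ ▷ a) = α ∘ (t ◁ α). -/
import Mathlib


open CategoryTheory

universe v₁ u₁ v₂ u₂

variable {K : Type u₁} [Category.{v₁} K]

/-- A weak mixed distributive law `λ : tc ⟶ ct` between a monad `t` and a comonad `c`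
on a category `K`, satisfying the four axioms of Böhm–Lack–Street, stated componentwise. -/
structure WeakMixedDistLaw (t : CategoryTheory.Monad K) (c : CategoryTheory.Comonad K) where
  l : (c.toFunctor ⋙ t.toFunctor) ⟶ (t.toFunctor ⋙ c.toFunctor)
  mul_compat : ∀ X : K, t.μ.app (c.obj X) ≫ l.app X =
    t.map (l.app X) ≫ l.app (t.obj X) ≫ c.map (t.μ.app X)
  comul_compat : ∀ X : K, t.map (c.δ.app X) ≫ l.app (c.obj X) ≫ c.map (l.app X) =
    l.app X ≫ c.δ.app (t.obj X)
  weak_unit : ∀ X : K, t.η.app (c.obj X) ≫ l.app X =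
    c.δ.app X ≫ c.map (t.η.app (c.obj X)) ≫ c.map (l.app X) ≫ c.map (c.ε.app (t.obj X))
  weak_counit : ∀ X : K, l.app X ≫ c.ε.app (t.obj X) =
    t.map (t.η.app (c.obj X)) ≫ t.map (l.app X) ≫ t.map (c.ε.app (t.obj X)) ≫ t.μ.app X

variable (t : CategoryTheory.Monad K) (c : CategoryTheory.Comonad K) (W : WeakMixedDistLaw t c)

/-- The canonical idempotent Θ. -/
def Th (X : K) : t.obj (c.obj X) ⟶ t.obj (c.obj X) :=
  t.map (c.δ.app X) ≫ W.l.app (c.obj X) ≫ c.ε.app (t.obj (c.obj X))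

lemma theta_l (Y : K) : Th t c W Y ≫ W.l.app Y = W.l.app Y := by
  have hε : c.ε.app (t.obj (c.obj Y)) ≫ W.l.app Y
      = c.map (W.l.app Y) ≫ c.ε.app (c.obj (t.obj Y)) :=
    (c.ε.naturality (W.l.app Y)).symm
  have := W.comul_compat Y
  calc Th t c W Y ≫ W.l.app Y
      = t.map (c.δ.app Y) ≫ W.l.app (c.obj Y) ≫ c.map (W.l.app Y) ≫ c.ε.app (c.obj (t.obj Y)) := by
        simp only [Th, Category.assoc, hε]
    _ = (t.map (c.δ.app Y) ≫ W.l.app (c.obj Y) ≫ c.map (W.l.app Y)) ≫ c.ε.app (c.obj (t.obj Y)) := by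
        simp only [Category.assoc]
    _ = W.l.app Y ≫ c.δ.app (t.obj Y) ≫ c.ε.app (c.obj (t.obj Y)) := by
        rw [this]; simp only [Category.assoc]
    _ = W.l.app Y := by rw [c.left_counit]; simp

lemma theta_delta (X : K) :
    Th t c W X ≫ t.map (c.δ.app X) = t.map (c.δ.app X) ≫ Th t c W (c.obj X) := by
  have hε : c.ε.app (t.obj (c.obj X)) ≫ t.map (c.δ.app X)
      = c.map (t.map (c.δ.app X)) ≫ c.ε.app (t.obj (c.obj (c.obj X))) :=
    (c.ε.naturality (t.map (c.δ.app X))).symm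
  have hl : W.l.app (c.obj X) ≫ c.map (t.map (c.δ.app X))
      = t.map (c.map (c.δ.app X)) ≫ W.l.app (c.obj (c.obj X)) :=
    (W.l.naturality (c.δ.app X)).symm
  calc Th t c W X ≫ t.map (c.δ.app X)
      = t.map (c.δ.app X) ≫ W.l.app (c.obj X) ≫ c.map (t.map (c.δ.app X))
          ≫ c.ε.app (t.obj (c.obj (c.obj X))) := by
        simp only [Th, Category.assoc, hε]
    _ = t.map (c.δ.app X) ≫ t.map (c.map (c.δ.app X)) ≫ W.l.app (c.obj (c.obj X))
          ≫ c.ε.app (t.obj (c.obj (c.obj X))) := by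
        rw [reassoc_of% hl]
    _ = t.map (c.δ.app X ≫ c.map (c.δ.app X)) ≫ W.l.app (c.obj (c.obj X))
          ≫ c.ε.app (t.obj (c.obj (c.obj X))) := by
        rw [t.toFunctor.map_comp]; simp only [Category.assoc]
    _ = t.map (c.δ.app X ≫ c.δ.app (c.obj X)) ≫ W.l.app (c.obj (c.obj X))
          ≫ c.ε.app (t.obj (c.obj (c.obj X))) := by
        rw [c.coassoc]
    _ = t.map (c.δ.app X) ≫ Th t c W (c.obj X) := by
        rw [t.toFunctor.map_comp]; simp only [Th, Category.assoc]

lemma mu_theta (X : K) :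
    t.μ.app (c.obj X) ≫ Th t c W X
      = t.map (t.map (c.δ.app X)) ≫ t.map (W.l.app (c.obj X))
          ≫ W.l.app (t.obj (c.obj X)) ≫ c.ε.app (t.obj (t.obj (c.obj X))) ≫ t.μ.app (c.obj X) := by
  have hμ : t.μ.app (c.obj X) ≫ t.map (c.δ.app X)
      = t.map (t.map (c.δ.app X)) ≫ t.μ.app (c.obj (c.obj X)) :=
    (t.μ.naturality (c.δ.app X)).symm
  have hε : c.map (t.μ.app (c.obj X)) ≫ c.ε.app (t.obj (c.obj X))
      = c.ε.app (t.obj (t.obj (c.obj X))) ≫ t.μ.app (c.obj X) :=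
    c.ε.naturality (t.μ.app (c.obj X))
  calc t.μ.app (c.obj X) ≫ Th t c W X
      = t.map (t.map (c.δ.app X)) ≫ (t.μ.app (c.obj (c.obj X)) ≫ W.l.app (c.obj X))
          ≫ c.ε.app (t.obj (c.obj X)) := by
        simp only [Th, reassoc_of% hμ, Category.assoc]
    _ = t.map (t.map (c.δ.app X)) ≫ t.map (W.l.app (c.obj X)) ≫ W.l.app (t.obj (c.obj X))
          ≫ c.map (t.μ.app (c.obj X)) ≫ c.ε.app (t.obj (c.obj X)) := by
        rw [W.mul_compat (c.obj X)]; simp only [Category.assoc]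
    _ = _ := by rw [hε]

lemma key (X : K) :
    t.map (Th t c W X) ≫ t.μ.app (c.obj X) ≫ Th t c W X = t.μ.app (c.obj X) ≫ Th t c W X := by
  rw [mu_theta]
  have h1 : t.map (Th t c W X) ≫ t.map (t.map (c.δ.app X)) ≫ t.map (W.l.app (c.obj X))
      = t.map (t.map (c.δ.app X)) ≫ t.map (W.l.app (c.obj X)) := by
    have h0 : Th t c W X ≫ t.map (c.δ.app X) ≫ W.l.app (c.obj X)
        = t.map (c.δ.app X) ≫ W.l.app (c.obj X) := by
      rw [reassoc_of% (theta_delta t c W X), theta_l]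
    simp only [← t.toFunctor.map_comp]
    rw [h0]
  rw [reassoc_of% h1]

/-- Through a splitting of the canonical idempotent on tc, the 2-cell
α = π ∘ (μ c) ∘ (t σ) is an action of the monad t on a. -/
theorem canonical_action (t : CategoryTheory.Monad K) (c : CategoryTheory.Comonad K)
    (W : WeakMixedDistLaw t c) (a : K ⥤ K) (π : (c.toFunctor ⋙ t.toFunctor) ⟶ a) (σ : a ⟶ (c.toFunctor ⋙ t.toFunctor))
    (hsec : σ ≫ π = 𝟙 a)
    (hsplit : ∀ X : K, π.app X ≫ σ.app X =
      t.map (c.δ.app X) ≫ W.l.app (c.obj X) ≫ c.ε.app (t.obj (c.obj X))) :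
    (∀ X : K, t.η.app (a.obj X) ≫ (t.map (σ.app X) ≫ t.μ.app (c.obj X) ≫ π.app X) = 𝟙 (a.obj X)) ∧
    (∀ X : K, t.μ.app (a.obj X) ≫ (t.map (σ.app X) ≫ t.μ.app (c.obj X) ≫ π.app X) =
      t.map (t.map (σ.app X) ≫ t.μ.app (c.obj X) ≫ π.app X) ≫
        (t.map (σ.app X) ≫ t.μ.app (c.obj X) ≫ π.app X)) := by
  have hσπ : ∀ X : K, σ.app X ≫ π.app X = 𝟙 (a.obj X) := fun X => by
    simpa using NatTrans.congr_app hsec X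
  have hΘπ : ∀ X : K, Th t c W X ≫ π.app X = π.app X := fun X => by
    rw [Th, ← hsplit X, Category.assoc, hσπ X, Category.comp_id]
  constructor
  · intro X
    have h1 : t.η.app (a.obj X) ≫ t.map (σ.app X) = σ.app X ≫ t.η.app (t.obj (c.obj X)) := by
      simpa using (t.η.naturality (σ.app X)).symm
    calc t.η.app (a.obj X) ≫ t.map (σ.app X) ≫ t.μ.app (c.obj X) ≫ π.app X
        = (t.η.app (a.obj X) ≫ t.map (σ.app X)) ≫ t.μ.app (c.obj X) ≫ π.app X := by
          simp only [Category.assoc]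
      _ = σ.app X ≫ (t.η.app (t.obj (c.obj X)) ≫ t.μ.app (c.obj X)) ≫ π.app X := by
          rw [h1]; simp only [Category.assoc]
      _ = σ.app X ≫ π.app X := by rw [t.left_unit]; simp
      _ = 𝟙 _ := hσπ X
  · intro X
    have h2 : t.μ.app (a.obj X) ≫ t.map (σ.app X)
        = t.map (t.map (σ.app X)) ≫ t.μ.app (t.obj (c.obj X)) := by
      simpa using (t.μ.naturality (σ.app X)).symm
    have h3 : t.map (π.app X) ≫ t.map (σ.app X) = t.map (Th t c W X) := by
      rw [← t.toFunctor.map_comp, hsplit X]; rfl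
    calc t.μ.app (a.obj X) ≫ t.map (σ.app X) ≫ t.μ.app (c.obj X) ≫ π.app X
        = t.map (t.map (σ.app X)) ≫ (t.μ.app (t.obj (c.obj X)) ≫ t.μ.app (c.obj X)) ≫ π.app X := by
          rw [reassoc_of% h2]; simp only [Category.assoc]
      _ = t.map (t.map (σ.app X)) ≫ t.map (t.μ.app (c.obj X)) ≫ t.μ.app (c.obj X) ≫ π.app X := by
          rw [← t.assoc]; simp only [Category.assoc]
      _ = t.map (t.map (σ.app X)) ≫ t.map (t.μ.app (c.obj X)) ≫ t.map (Th t c W X)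
            ≫ t.μ.app (c.obj X) ≫ π.app X := by
          have h4 : t.map (Th t c W X) ≫ t.μ.app (c.obj X) ≫ π.app X
              = t.μ.app (c.obj X) ≫ π.app X := by
            rw [← hΘπ X, reassoc_of% (key t c W X)]
          rw [h4]
      _ = t.map (t.map (σ.app X) ≫ t.μ.app (c.obj X) ≫ π.app X) ≫
            t.map (σ.app X) ≫ t.μ.app (c.obj X) ≫ π.app X := by
          simp only [Functor.map_comp, Category.assoc, ← h3]
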